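/- Let X, Y1, Y2 be Hilbert spaces, A1 : Y1 → X and A2 : Y2 → X bounded linear operators, and ξ ∈ X with ξ ∈ range(A1) but ξ ∉ range(A2). For α > 0 set η_α := (A2 A2* + α I)⁻¹ ξ and ξ_α := η_α / ⟨ξ, η_α⟩^{3/4}. Then ‖A1* ξ_α‖ → ∞ and ‖A2* ξ_α‖ → 0 as α → 0+. -/

import Mathlib

open ContinuousLinearMap Filter
open scoped InnerProductSpace Topology

set_option maxHeartbeats 1000000

/-- Lemma A.2 of the paper: for `ξ ∈ range A₁ \ range A₂`, the normalized regularized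
elements `ξ_α = η_α / ⟨ξ, η_α⟩^(3/4)` with `η_α = (A₂A₂* + αI)⁻¹ ξ` satisfy
`‖A₁* ξ_α‖ → ∞` and `A₂* ξ_α → 0` as `α → 0⁺`. -/
theorem localized_sequence_construction
    {X Y1 Y2 : Type*}
    [NormedAddCommGroup X] [InnerProductSpace ℝ X] [CompleteSpace X]
    [NormedAddCommGroup Y1] [InnerProductSpace ℝ Y1] [CompleteSpace Y1]
    [NormedAddCommGroup Y2] [InnerProductSpace ℝ Y2] [CompleteSpace Y2]
    (A1 : Y1 →L[ℝ] X) (A2 : Y2 →L[ℝ] X) (ξ : X)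
    (hξ1 : ξ ∈ Set.range A1) (hξ2 : ξ ∉ Set.range A2) (η : ℝ → X)
    (hη : ∀ α : ℝ, 0 < α →
      (A2 ∘L adjoint A2 + α • (1 : X →L[ℝ] X)) (η α) = ξ)
    (ξa : ℝ → X)
    (hξa : ∀ α : ℝ, 0 < α → ξa α = (⟪ξ, η α⟫_ℝ ^ ((3 : ℝ) / 4))⁻¹ • η α) :
    Tendsto (fun α => ‖adjoint A1 (ξa α)‖) (𝓝[>] (0 : ℝ)) atTop ∧
      Tendsto (fun α => ‖adjoint A2 (ξa α)‖) (𝓝[>] (0 : ℝ)) (𝓝 0) := by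
  classical
  obtain ⟨v, hv⟩ := hξ1
  have hξ0 : ξ ≠ 0 := fun h => hξ2 ⟨0, by simp [h]⟩
  set φ : ℝ → ℝ := fun α => ⟪ξ, η α⟫_ℝ with hφdef
  -- the defining equation in applied form
  have hT : ∀ α : ℝ, 0 < α → A2 (adjoint A2 (η α)) + α • η α = ξ := by
    intro α hα
    have h := hη α hα
    simpa [ContinuousLinearMap.add_apply, ContinuousLinearMap.comp_apply,
      ContinuousLinearMap.smul_apply, ContinuousLinearMap.one_apply] using h
  -- φ α = ‖A2* η α‖² + α ‖η α‖²
  have hφ_eq : ∀ α : ℝ, 0 < α →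
      φ α = ‖adjoint A2 (η α)‖ ^ 2 + α * ‖η α‖ ^ 2 := by
    intro α hα
    have h := hT α hα
    calc φ α = ⟪A2 (adjoint A2 (η α)) + α • η α, η α⟫_ℝ := by
          rw [hφdef]; rw [← h]
      _ = ⟪A2 (adjoint A2 (η α)), η α⟫_ℝ + α * ⟪η α, η α⟫_ℝ := by
          rw [inner_add_left, real_inner_smul_left]
      _ = ‖adjoint A2 (η α)‖ ^ 2 + α * ‖η α‖ ^ 2 := by
          rw [← ContinuousLinearMap.adjoint_inner_right A2,
            real_inner_self_eq_norm_sq, real_inner_self_eq_norm_sq]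
  have hη0 : ∀ α : ℝ, 0 < α → η α ≠ 0 := by
    intro α hα h
    apply hξ0
    rw [← hT α hα, h]
    simp
  have hφpos : ∀ α : ℝ, 0 < α → 0 < φ α := by
    intro α hα
    rw [hφ_eq α hα]
    have h2 : 0 < ‖η α‖ ^ 2 := pow_pos (norm_pos_iff.mpr (hη0 α hα)) 2
    nlinarith [sq_nonneg ‖adjoint A2 (η α)‖, mul_pos hα h2]
  -- resolvent difference identity
  have hdiff : ∀ α β : ℝ, 0 < α → 0 < β →
      φ α - φ β = (β - α) * ⟪η α, η β⟫_ℝ := by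
    intro α β hα hβ
    have h1 : φ α = ⟪adjoint A2 (η β), adjoint A2 (η α)⟫_ℝ + β * ⟪η β, η α⟫_ℝ := by
      calc φ α = ⟪A2 (adjoint A2 (η β)) + β • η β, η α⟫_ℝ := by
            rw [hφdef]; rw [← hT β hβ]
        _ = _ := by
            rw [inner_add_left, real_inner_smul_left,
              ← ContinuousLinearMap.adjoint_inner_right A2]
    have h2 : φ β = ⟪adjoint A2 (η α), adjoint A2 (η β)⟫_ℝ + α * ⟪η α, η β⟫_ℝ := by
      calc φ β = ⟪A2 (adjoint A2 (η α)) + α • η α, η β⟫_ℝ := by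
            rw [hφdef]; rw [← hT α hα]
        _ = _ := by
            rw [inner_add_left, real_inner_smul_left,
              ← ContinuousLinearMap.adjoint_inner_right A2]
    rw [h1, h2, real_inner_comm (η β) (η α),
      real_inner_comm (adjoint A2 (η β)) (adjoint A2 (η α))]
    ring
  -- nonnegativity of the mixed inner product
  have hinner_nonneg : ∀ α β : ℝ, 0 < α → α ≤ β → 0 ≤ ⟪η α, η β⟫_ℝ := by
    intro α β hα hαβ
    rcases eq_or_lt_of_le hαβ with rfl | hlt
    · exact real_inner_self_nonneg
    have hβ : 0 < β := lt_trans hα hlt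
    set d := η α - η β with hd
    have hkey : A2 (adjoint A2 d) + α • d = (β - α) • η β := by
      have h1 := hT α hα
      have h2 := hT β hβ
      have : A2 (adjoint A2 (η α)) + α • η α
          - (A2 (adjoint A2 (η β)) + β • η β) = 0 := by rw [h1, h2]; simp
      rw [hd]
      simp only [map_sub, smul_sub, sub_smul]
      abel_nf
      abel_nf at this
      linear_combination (norm := module) this
    have hpos : 0 ≤ ⟪d, η β⟫_ℝ := by
      have h3 : (β - α) * ⟪d, η β⟫_ℝ = ‖adjoint A2 d‖ ^ 2 + α * ‖d‖ ^ 2 := by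
        calc (β - α) * ⟪d, η β⟫_ℝ = ⟪d, (β - α) • η β⟫_ℝ := by
              rw [real_inner_smul_right]
          _ = ⟪d, A2 (adjoint A2 d)⟫_ℝ + α * ⟪d, d⟫_ℝ := by
              rw [← hkey, inner_add_right, real_inner_smul_right]
          _ = ‖adjoint A2 d‖ ^ 2 + α * ‖d‖ ^ 2 := by
              rw [← ContinuousLinearMap.adjoint_inner_left A2,
                real_inner_self_eq_norm_sq, real_inner_self_eq_norm_sq]
      have h4 : 0 ≤ (β - α) * ⟪d, η β⟫_ℝ := by
        rw [h3]; positivity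
      exact nonneg_of_mul_nonneg_right h4 (by linarith)
    have h5 : ⟪η α, η β⟫_ℝ = ⟪η β, η β⟫_ℝ + ⟪d, η β⟫_ℝ := by
      rw [hd, inner_sub_left]; ring
    rw [h5]
    have := real_inner_self_nonneg (x := η β)
    linarith
  -- monotonicity: φ is antitone on (0, ∞)
  have hmono : ∀ α β : ℝ, 0 < α → α ≤ β → φ β ≤ φ α := by
    intro α β hα hαβ
    have hβ : 0 < β := lt_of_lt_of_le hα hαβ
    have h := hdiff α β hα hβ
    nlinarith [hinner_nonneg α β hα hαβ]
  -- the Cauchy estimate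
  have hcauchy : ∀ α β : ℝ, 0 < α → α ≤ β →
      ‖adjoint A2 (η α) - adjoint A2 (η β)‖ ^ 2 ≤ φ α - φ β := by
    intro α β hα hαβ
    have hβ : 0 < β := lt_of_lt_of_le hα hαβ
    set wα := adjoint A2 (η α)
    set wβ := adjoint A2 (η β)
    have hmix : ⟪wα, wβ⟫_ℝ = φ β - α * ⟪η α, η β⟫_ℝ := by
      calc ⟪wα, wβ⟫_ℝ = ⟪A2 (adjoint A2 (η α)), η β⟫_ℝ := by
            rw [ContinuousLinearMap.adjoint_inner_right A2]
        _ = ⟪ξ - α • η α, η β⟫_ℝ := by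
            rw [← hT α hα]; congr 1; abel
        _ = φ β - α * ⟪η α, η β⟫_ℝ := by
            rw [inner_sub_left, real_inner_smul_left]
    have hnorm : ‖wα - wβ‖ ^ 2 = ‖wα‖ ^ 2 - 2 * ⟪wα, wβ⟫_ℝ + ‖wβ‖ ^ 2 :=
      norm_sub_sq_real wα wβ
    have hwα : ‖wα‖ ^ 2 = φ α - α * ‖η α‖ ^ 2 := by
      have := hφ_eq α hα; simp only [wα]; linarith
    have hwβ : ‖wβ‖ ^ 2 = φ β - β * ‖η β‖ ^ 2 := by
      have := hφ_eq β hβ; simp only [wβ]; linarith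
    have hCS : ⟪η α, η β⟫_ℝ ≤ ‖η α‖ * ‖η β‖ := real_inner_le_norm _ _
    have hAMGM : 2 * (‖η α‖ * ‖η β‖) ≤ ‖η α‖ ^ 2 + ‖η β‖ ^ 2 := by
      nlinarith [sq_nonneg (‖η α‖ - ‖η β‖)]
    have hsq : 0 ≤ ‖η β‖ ^ 2 := sq_nonneg _
    have key : 2 * α * ⟪η α, η β⟫_ℝ ≤ α * ‖η α‖ ^ 2 + β * ‖η β‖ ^ 2 := by
      have t1 : 2 * α * ⟪η α, η β⟫_ℝ ≤ 2 * α * (‖η α‖ * ‖η β‖) :=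
        mul_le_mul_of_nonneg_left hCS (by positivity)
      have t2 : α * (2 * (‖η α‖ * ‖η β‖)) ≤ α * (‖η α‖ ^ 2 + ‖η β‖ ^ 2) :=
        mul_le_mul_of_nonneg_left hAMGM hα.le
      have t3 : α * ‖η β‖ ^ 2 ≤ β * ‖η β‖ ^ 2 :=
        mul_le_mul_of_nonneg_right hαβ hsq
      nlinarith [t1, t2, t3]
    linarith [hnorm, hwα, hwβ, hmix, key]
  have hwle : ∀ α : ℝ, 0 < α → ‖adjoint A2 (η α)‖ ^ 2 ≤ φ α := by
    intro α hα
    have := hφ_eq α hα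
    nlinarith [sq_nonneg ‖η α‖]
  -- unboundedness of φ near 0
  have hunbdd : ∀ C : ℝ, ∃ α : ℝ, 0 < α ∧ C < φ α := by
    by_contra h
    push_neg at h
    obtain ⟨C, hC⟩ := h
    set a : ℕ → ℝ := fun n => 1 / (n + 1) with ha_def
    have ha : ∀ n, 0 < a n := fun n => by positivity
    have hamono : ∀ m n : ℕ, m ≤ n → a n ≤ a m := by
      intro m n hmn
      apply one_div_le_one_div_of_le (by positivity)
      exact_mod_cast by exact_mod_cast add_le_add_left (Nat.cast_le.mpr hmn) 1
    set g : ℕ → ℝ := fun n => φ (a n) with hg_def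
    have hgmono : Monotone g := by
      intro m n hmn
      exact hmono (a n) (a m) (ha n) (hamono m n hmn)
    have hgbdd : BddAbove (Set.range g) := by
      refine ⟨C, ?_⟩
      rintro x ⟨n, rfl⟩
      exact hC (a n) (ha n)
    have hgS : Tendsto g atTop (𝓝 (⨆ n, g n)) := tendsto_atTop_ciSup hgmono hgbdd
    set S := ⨆ n, g n with hS_def
    have hgle : ∀ n, g n ≤ S := fun n => le_ciSup hgbdd n
    set w : ℕ → Y2 := fun n => adjoint A2 (η (a n)) with hw_def
    have hdist : ∀ n m N : ℕ, N ≤ n → N ≤ m →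
        dist (w n) (w m) ≤ Real.sqrt (S - g N) := by
      have key : ∀ n m N : ℕ, N ≤ n → N ≤ m → m ≤ n →
          dist (w n) (w m) ≤ Real.sqrt (S - g N) := by
        intro n m N hNn hNm hmn
        have h1 : ‖w n - w m‖ ^ 2 ≤ φ (a n) - φ (a m) :=
          hcauchy (a n) (a m) (ha n) (hamono m n hmn)
        have h2 : φ (a n) - φ (a m) ≤ S - g N := by
          have := hgle n
          have := hgmono hNm
          simp only [hg_def] at *
          linarith
        rw [dist_eq_norm]
        rw [show Real.sqrt (S - g N) = Real.sqrt (S - g N) from rfl]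
        have h3 : ‖w n - w m‖ ^ 2 ≤ S - g N := le_trans h1 h2
        calc ‖w n - w m‖ = Real.sqrt (‖w n - w m‖ ^ 2) := by
              rw [Real.sqrt_sq (norm_nonneg _)]
          _ ≤ Real.sqrt (S - g N) := Real.sqrt_le_sqrt h3
      intro n m N hNn hNm
      rcases le_total m n with hmn | hnm
      · exact key n m N hNn hNm hmn
      · rw [dist_comm]; exact key m n N hNm hNn hnm
    have hb0 : Tendsto (fun N => Real.sqrt (S - g N)) atTop (𝓝 0) := by
      have h1 : Tendsto (fun N => S - g N) atTop (𝓝 0) := by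
        have := tendsto_const_nhds (x := S) (f := atTop (α := ℕ)) |>.sub hgS
        simpa using this
      have h2 := (Real.continuous_sqrt.tendsto 0).comp h1
      simpa [Function.comp_def] using h2
    have hwcauchy : CauchySeq w := cauchySeq_of_le_tendsto_0 _ hdist hb0
    obtain ⟨y, hy⟩ := cauchySeq_tendsto_of_complete hwcauchy
    have hA2w : ∀ n, A2 (w n) = ξ - a n • η (a n) := by
      intro n
      have := hT (a n) (ha n)
      simp only [hw_def]
      linear_combination (norm := module) this
    have hCpos : 0 < C := lt_of_lt_of_le (hφpos (a 0) (ha 0)) (hC (a 0) (ha 0))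
    have h2 : Tendsto (fun n => A2 (w n)) atTop (𝓝 ξ) := by
      rw [tendsto_iff_norm_sub_tendsto_zero]
      have hb : ∀ n, ‖A2 (w n) - ξ‖ ≤ Real.sqrt (a n * C) := by
        intro n
        rw [hA2w n]
        have h3 : ‖ξ - a n • η (a n) - ξ‖ = a n * ‖η (a n)‖ := by
          rw [show ξ - a n • η (a n) - ξ = -(a n • η (a n)) by abel, norm_neg,
            norm_smul, Real.norm_eq_abs, abs_of_pos (ha n)]
        rw [h3]
        rw [show Real.sqrt (a n * C) = Real.sqrt (a n * C) from rfl]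
        have h4 : (a n * ‖η (a n)‖) ^ 2 ≤ a n * C := by
          have h5 := hφ_eq (a n) (ha n)
          have h6 := hC (a n) (ha n)
          have h7 : a n * ‖η (a n)‖ ^ 2 ≤ φ (a n) := by
            nlinarith [sq_nonneg ‖adjoint A2 (η (a n))‖]
          have : a n * (a n * ‖η (a n)‖ ^ 2) ≤ a n * C :=
            mul_le_mul_of_nonneg_left (le_trans h7 h6) (ha n).le
          nlinarith
        calc a n * ‖η (a n)‖ = Real.sqrt ((a n * ‖η (a n)‖) ^ 2) := by
              rw [Real.sqrt_sq (by positivity)]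
          _ ≤ Real.sqrt (a n * C) := Real.sqrt_le_sqrt h4
      have hg0 : Tendsto (fun n : ℕ => Real.sqrt (a n * C)) atTop (𝓝 0) := by
        have h1 : Tendsto (fun n : ℕ => a n * C) atTop (𝓝 0) := by
          have := (tendsto_one_div_add_atTop_nhds_zero_nat).mul_const C
          simpa [ha_def] using this
        have h2 := (Real.continuous_sqrt.tendsto 0).comp h1
        simpa [Function.comp_def] using h2
      exact squeeze_zero (fun n => norm_nonneg _) hb hg0
    have h1 : Tendsto (fun n => A2 (w n)) atTop (𝓝 (A2 y)) :=
      (A2.continuous.tendsto y).comp hy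
    exact hξ2 ⟨y, tendsto_nhds_unique h1 h2⟩
  -- φ tends to ∞ at 0⁺
  have hφtop : Tendsto φ (𝓝[>] (0 : ℝ)) atTop := by
    rw [tendsto_atTop]
    intro C
    obtain ⟨α₀, hα₀, hCφ⟩ := hunbdd C
    filter_upwards [Ioo_mem_nhdsGT_of_mem ⟨le_refl (0 : ℝ), hα₀⟩] with α hα
    exact le_trans hCφ.le (hmono α α₀ hα.1 hα.2.le)
  have hv0 : v ≠ 0 := by
    rintro rfl
    exact hξ0 (by simpa using hv.symm)
  constructor
  · -- ‖A1* ξa α‖ → ∞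
    have hlow : ∀ᶠ α in 𝓝[>] (0 : ℝ),
        (φ α) ^ ((1 : ℝ) / 4) / ‖v‖ ≤ ‖adjoint A1 (ξa α)‖ := by
      filter_upwards [self_mem_nhdsWithin] with α hα
      have hα : (0 : ℝ) < α := hα
      have hp := hφpos α hα
      have hinner : ⟪adjoint A1 (ξa α), v⟫_ℝ = (φ α) ^ ((1 : ℝ) / 4) := by
        rw [ContinuousLinearMap.adjoint_inner_left, hv, hξa α hα,
          real_inner_smul_left]
        have hφα : ⟪ξ, η α⟫_ℝ = φ α := by rw [hφdef]
        have h1 : ⟪η α, ξ⟫_ℝ = φ α := by rw [real_inner_comm, hφα]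
        rw [h1, hφα]
        have hc3 : (0:ℝ) < φ α ^ ((3:ℝ)/4) := Real.rpow_pos_of_pos hp _
        rw [inv_mul_eq_div, div_eq_iff (ne_of_gt hc3), ← Real.rpow_add hp]
        norm_num
      have hle := real_inner_le_norm (adjoint A1 (ξa α)) v
      rw [hinner] at hle
      rw [div_le_iff₀ (norm_pos_iff.mpr hv0)]
      exact hle
    refine tendsto_atTop_mono' _ hlow ?_
    exact ((tendsto_rpow_atTop (by norm_num : (0:ℝ) < 1/4)).comp hφtop).atTop_div_const
      (norm_pos_iff.mpr hv0)
  · -- ‖A2* ξa α‖ → 0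
    have hub : ∀ᶠ α in 𝓝[>] (0 : ℝ),
        ‖adjoint A2 (ξa α)‖ ≤ (φ α) ^ (-(1 : ℝ) / 4) := by
      filter_upwards [self_mem_nhdsWithin] with α hα
      have hα : (0 : ℝ) < α := hα
      have hp := hφpos α hα
      have hφα : ⟪ξ, η α⟫_ℝ = φ α := by rw [hφdef]
      have h1 : ‖adjoint A2 (ξa α)‖ = (φ α ^ ((3:ℝ)/4))⁻¹ * ‖adjoint A2 (η α)‖ := by
        rw [hξa α hα, hφα, map_smul, norm_smul, Real.norm_eq_abs,
          abs_of_pos (by positivity : (0:ℝ) < (φ α ^ ((3:ℝ)/4))⁻¹)]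
      have h2 : ‖adjoint A2 (η α)‖ ≤ (φ α) ^ ((1 : ℝ) / 2) := by
        have h3 := hwle α hα
        have h4 : (φ α) ^ ((1 : ℝ) / 2) = Real.sqrt (φ α) :=
          (Real.sqrt_eq_rpow (φ α)).symm
        rw [h4]
        calc ‖adjoint A2 (η α)‖ = Real.sqrt (‖adjoint A2 (η α)‖ ^ 2) := by
              rw [Real.sqrt_sq (norm_nonneg _)]
          _ ≤ Real.sqrt (φ α) := Real.sqrt_le_sqrt h3
      rw [h1]
      have h5 : (φ α ^ ((3:ℝ)/4))⁻¹ * (φ α) ^ ((1 : ℝ) / 2) = (φ α) ^ (-(1 : ℝ) / 4) := by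
        rw [← Real.rpow_neg hp.le, ← Real.rpow_add hp]
        norm_num
      calc (φ α ^ ((3:ℝ)/4))⁻¹ * ‖adjoint A2 (η α)‖
          ≤ (φ α ^ ((3:ℝ)/4))⁻¹ * (φ α) ^ ((1 : ℝ) / 2) :=
            mul_le_mul_of_nonneg_left h2 (by positivity)
        _ = (φ α) ^ (-(1 : ℝ) / 4) := h5
    have hg0 : Tendsto (fun α => (φ α) ^ (-(1 : ℝ) / 4)) (𝓝[>] (0:ℝ)) (𝓝 0) := by
      have := (tendsto_rpow_neg_atTop (by norm_num : (0:ℝ) < 1/4)).comp hφtop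
      simpa [neg_div, Function.comp_def] using this
    exact squeeze_zero' (Eventually.of_forall fun α => norm_nonneg _) hub hg0
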